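/- Let U = [[A, B], [C, D]] be a block unitary matrix on ℂ^m ⊕ ℂ^n and let Ψ(z) = A + zB(I − zD)^{-1}C. If |z| = 1, I − zD is invertible, and w is an eigenvalue of Ψ(z), then |w| = 1. -/

import Mathlib

open Matrix

set_option maxHeartbeats 1000000 in
private theorem psi_unitary (m n : ℕ)
    (A : Matrix (Fin m) (Fin m) ℂ) (B : Matrix (Fin m) (Fin n) ℂ)
    (C : Matrix (Fin n) (Fin m) ℂ) (D : Matrix (Fin n) (Fin n) ℂ)
    (hU : Matrix.fromBlocks A B C D ∈ Matrix.unitaryGroup (Fin m ⊕ Fin n) ℂ)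
    (z : ℂ) (hz : ‖z‖ = 1) (hinv : IsUnit ((1 : Matrix (Fin n) (Fin n) ℂ) - z • D)) :
    (A + z • (B * (1 - z • D)⁻¹ * C))ᴴ * (A + z • (B * (1 - z • D)⁻¹ * C)) = 1 := by
  set N : Matrix (Fin n) (Fin n) ℂ := 1 - z • D with hN
  set M : Matrix (Fin n) (Fin n) ℂ := N⁻¹ with hM
  have hdet : IsUnit N.det := (Matrix.isUnit_iff_isUnit_det N).mp hinv
  have hNM : N * M = 1 := Matrix.mul_nonsing_inv N hdet
  have hMN : M * N = 1 := Matrix.nonsing_inv_mul N hdet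
  have hz1 : (starRingEnd ℂ) z * z = 1 := by
    rw [← Complex.normSq_eq_conj_mul_self]
    norm_cast
    rw [Complex.normSq_eq_norm_sq, hz]
    norm_num
  -- block relations
  have h : star (fromBlocks A B C D) * fromBlocks A B C D = 1 := hU.1
  rw [Matrix.star_eq_conjTranspose, Matrix.fromBlocks_conjTranspose,
      Matrix.fromBlocks_multiply, ← Matrix.fromBlocks_one] at h
  have hAA : Aᴴ * A + Cᴴ * C = 1 := by
    have := congrArg Matrix.toBlocks₁₁ h; simpa only [Matrix.toBlocks_fromBlocks₁₁] using this
  have hAB : Aᴴ * B + Cᴴ * D = 0 := by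
    have := congrArg Matrix.toBlocks₁₂ h; simpa only [Matrix.toBlocks_fromBlocks₁₂] using this
  have hBA : Bᴴ * A + Dᴴ * C = 0 := by
    have := congrArg Matrix.toBlocks₂₁ h; simpa only [Matrix.toBlocks_fromBlocks₂₁] using this
  have hBB : Bᴴ * B + Dᴴ * D = 1 := by
    have := congrArg Matrix.toBlocks₂₂ h; simpa only [Matrix.toBlocks_fromBlocks₂₂] using this
  have hAA' : Aᴴ * A = 1 - Cᴴ * C := by rw [← hAA]; abel
  have hBA' : Bᴴ * A = -(Dᴴ * C) := by rw [eq_neg_iff_add_eq_zero, hBA]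
  have hAB' : ∀ (X : Matrix (Fin m) (Fin n) ℂ) (Y : Matrix (Fin n) (Fin m) ℂ),
      Aᴴ * (B * Y) = -(Cᴴ * (D * Y)) := fun X Y => by
    rw [← Matrix.mul_assoc, ← Matrix.mul_assoc, eq_neg_iff_add_eq_zero, ← Matrix.add_mul,
      hAB, Matrix.zero_mul]
  have hBB' : ∀ (Y : Matrix (Fin n) (Fin m) ℂ),
      Bᴴ * (B * Y) = Y - Dᴴ * (D * Y) := fun Y => by
    rw [← Matrix.mul_assoc, ← Matrix.mul_assoc, eq_sub_iff_add_eq, ← Matrix.add_mul, hBB,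
      Matrix.one_mul]
  -- inverse helpers
  have hMNH : Mᴴ * Nᴴ = 1 := by rw [← Matrix.conjTranspose_mul, hNM, Matrix.conjTranspose_one]
  have hNMH : Nᴴ * Mᴴ = 1 := by rw [← Matrix.conjTranspose_mul, hMN, Matrix.conjTranspose_one]
  -- key: Nᴴ N expansion
  have hK : 1 - Dᴴ*D - (starRingEnd ℂ) z • (Dᴴ * N) - z • (Nᴴ * D) = Nᴴ * N := by
    rw [hN]
    simp only [conjTranspose_sub, conjTranspose_smul, conjTranspose_one, sub_mul, mul_sub,
      one_mul, mul_one, smul_mul_assoc, mul_smul_comm, smul_smul, smul_sub, hz1, one_smul,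
      Complex.star_def]
    abel
  -- bracket identity
  have hbr : Mᴴ * M - Mᴴ * (Dᴴ * D) * M - (starRingEnd ℂ) z • (Mᴴ * Dᴴ) - z • (D * M) = 1 := by
    have e1 : Mᴴ * Dᴴ = Mᴴ * (Dᴴ * N) * M := by
      rw [Matrix.mul_assoc, Matrix.mul_assoc, hNM, Matrix.mul_one]
    have e2 : D * M = Mᴴ * (Nᴴ * D) * M := by
      rw [← Matrix.mul_assoc, hMNH, Matrix.one_mul]
    have e3 : Mᴴ * M = Mᴴ * (1:Matrix (Fin n) (Fin n) ℂ) * M := by rw [Matrix.mul_one]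
    rw [e1, e2, e3]
    have : Mᴴ * (1:Matrix (Fin n) (Fin n) ℂ) * M - Mᴴ * (Dᴴ * D) * M
        - (starRingEnd ℂ) z • (Mᴴ * (Dᴴ * N) * M) - z • (Mᴴ * (Nᴴ * D) * M)
        = Mᴴ * (1 - Dᴴ*D - (starRingEnd ℂ) z • (Dᴴ * N) - z • (Nᴴ * D)) * M := by
      simp only [Matrix.mul_sub, Matrix.sub_mul, Matrix.mul_smul, Matrix.smul_mul,
        mul_smul_comm, smul_mul_assoc]
    rw [this, hK, ← Matrix.mul_assoc Mᴴ Nᴴ N, hMNH, Matrix.one_mul, hNM]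
  -- multiply bracket by Cᴴ and C
  have hbrC : Cᴴ * (Mᴴ * (M * C)) - Cᴴ * (Mᴴ * (Dᴴ * (D * (M * C))))
      - (starRingEnd ℂ) z • (Cᴴ * (Mᴴ * (Dᴴ * C))) - z • (Cᴴ * (D * (M * C))) = Cᴴ * C := by
    have := congrArg (fun X => Cᴴ * X * C) hbr
    simp only [Matrix.mul_sub, Matrix.sub_mul, mul_smul_comm, smul_mul_assoc,
      Matrix.mul_one, Matrix.mul_assoc] at this
    convert this using 2 <;> simp [Matrix.mul_assoc]
  -- main expansion
  simp only [conjTranspose_add, conjTranspose_smul, conjTranspose_mul, add_mul, mul_add,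
    smul_mul_assoc, mul_smul_comm, smul_smul, Matrix.mul_assoc, Complex.star_def,
    hAA', hBA', hAB' 0, hBB', hz1, one_smul]
  rw [← hbrC]
  have hz1' : z * (starRingEnd ℂ) z = 1 := by rw [mul_comm]; exact hz1
  simp only [Matrix.mul_sub, Matrix.mul_neg, smul_sub, smul_neg, smul_add, smul_smul,
    hz1', neg_smul, one_smul]
  abel

theorem transfer_function_eigenvalues_unimodular (m n : ℕ)
    (A : Matrix (Fin m) (Fin m) ℂ) (B : Matrix (Fin m) (Fin n) ℂ)
    (C : Matrix (Fin n) (Fin m) ℂ) (D : Matrix (Fin n) (Fin n) ℂ)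
    (hU : Matrix.fromBlocks A B C D ∈ Matrix.unitaryGroup (Fin m ⊕ Fin n) ℂ)
    (z : ℂ) (hz : ‖z‖ = 1) (hinv : IsUnit ((1 : Matrix (Fin n) (Fin n) ℂ) - z • D))
    (w : ℂ) (v : Fin m → ℂ) (hv : v ≠ 0)
    (heig : (A + z • (B * (1 - z • D)⁻¹ * C)) *ᵥ v = w • v) :
    ‖w‖ = 1 := by
  set Ψ : Matrix (Fin m) (Fin m) ℂ := A + z • (B * (1 - z • D)⁻¹ * C) with hPsiDef
  have hPsi : Ψᴴ * Ψ = 1 := psi_unitary m n A B C D hU z hz hinv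
  have hvv : star v ⬝ᵥ v ≠ 0 := by
    intro h
    apply hv
    have hre : (star v ⬝ᵥ v).re = ∑ j, Complex.normSq (v j) := by
      simp [dotProduct, Complex.mul_re, Complex.normSq, Complex.re_sum]
    rw [h] at hre
    funext i
    have := (Finset.sum_eq_zero_iff_of_nonneg (fun j _ => Complex.normSq_nonneg (v j))).mp
      hre.symm i (Finset.mem_univ i)
    simpa using Complex.normSq_eq_zero.mp this
  have h1 : star (Ψ *ᵥ v) ⬝ᵥ (Ψ *ᵥ v) = star v ⬝ᵥ v := by
    rw [Matrix.star_mulVec, Matrix.dotProduct_mulVec, Matrix.vecMul_vecMul, hPsi,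
      Matrix.vecMul_one]
  rw [heig] at h1
  have h2 : (starRingEnd ℂ) w * w * (star v ⬝ᵥ v) = star v ⬝ᵥ v := by
    calc (starRingEnd ℂ) w * w * (star v ⬝ᵥ v) = star (w • v) ⬝ᵥ (w • v) := by
          rw [star_smul, smul_dotProduct, dotProduct_smul]
          simp only [smul_eq_mul, Complex.star_def]
          ring
      _ = star v ⬝ᵥ v := h1
  have h3 : (starRingEnd ℂ) w * w = 1 :=
    mul_right_cancel₀ hvv (h2.trans (one_mul _).symm)
  have h4 : ‖w‖ ^ 2 = 1 := by
    have : ((Complex.normSq w : ℝ) : ℂ) = 1 := by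
      rw [Complex.normSq_eq_conj_mul_self]; exact h3
    have h5 : Complex.normSq w = 1 := by exact_mod_cast this
    rw [← Complex.sq_norm] at h5
    exact h5
  nlinarith [norm_nonneg w]
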